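/- If mechanism error for analyst i is Err_i = (2/ε²)‖Wᵢ S⁺‖²_F and adding an analyst transforms the strategy S into DŜ where Ŝ = [S; C] (rows added) and D is diagonal with entries ≥ 1 (weights scaled up), while the per-query noise scale 1/ε is unchanged, then Err_i can only decrease or stay the same: (2/ε²)‖Wᵢ(D[S;C])⁺‖²_F ≤ (2/ε²)‖WᵢS⁺‖²_F. -/

import Mathlib

open Matrix BigOperators

noncomputable def frob {m n : Type*} [Fintype m] [Fintype n] (M : Matrix m n ℝ) : ℝ :=
  Real.sqrt (∑ i, ∑ j, (M i j) ^ 2)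

def IsMPInv {k n : Type*} [Fintype k] [Fintype n] (A : Matrix k n ℝ) (P : Matrix n k ℝ) : Prop :=
  A * P * A = A ∧ P * A * P = P ∧ (A * P)ᵀ = A * P ∧ (P * A)ᵀ = P * A

lemma trMMT {m n : Type*} [Fintype m] [Fintype n] (M : Matrix m n ℝ) :
    Matrix.trace (M * Mᵀ) = ∑ i, ∑ j, (M i j) ^ 2 := by
  simp [Matrix.trace, Matrix.mul_apply, Matrix.diag, sq]

lemma frob_sq {m n : Type*} [Fintype m] [Fintype n] (M : Matrix m n ℝ) :
    frob M ^ 2 = ∑ i, ∑ j, (M i j) ^ 2 :=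
  Real.sq_sqrt (Finset.sum_nonneg fun _ _ => Finset.sum_nonneg fun _ _ => sq_nonneg _)

lemma sq_sum_nonneg {m n : Type*} [Fintype m] [Fintype n] (M : Matrix m n ℝ) :
    0 ≤ ∑ i, ∑ j, (M i j) ^ 2 :=
  Finset.sum_nonneg fun _ _ => Finset.sum_nonneg fun _ _ => sq_nonneg _

lemma proj_contract {m n : Type*} [Fintype m] [Fintype n]
    (X : Matrix m n ℝ) (Q : Matrix n n ℝ) (hQt : Qᵀ = Q) (hQQ : Q * Q = Q) :
    ∑ i, ∑ j, ((X * Q) i j) ^ 2 ≤ ∑ i, ∑ j, (X i j) ^ 2 := by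
  have e1 : X * Q * (Q * Xᵀ) = X * Q * Xᵀ := by
    rw [← Matrix.mul_assoc, Matrix.mul_assoc X Q Q, hQQ]
  have e2 : X * (Q * Xᵀ) = X * Q * Xᵀ := (Matrix.mul_assoc X Q Xᵀ).symm
  have key : (X * Q) * (X * Q)ᵀ + (X - X * Q) * (X - X * Q)ᵀ = X * Xᵀ := by
    simp only [Matrix.transpose_mul, Matrix.transpose_sub, hQt, Matrix.sub_mul,
      Matrix.mul_sub, e1, e2]
    abel
  have := congrArg Matrix.trace key
  rw [Matrix.trace_add, trMMT, trMMT, trMMT] at this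
  nlinarith [sq_sum_nonneg (X - X * Q)]

theorem stmt19 {m k p n : Type*} [Fintype m] [Fintype k] [Fintype p] [Fintype n]
    [DecidableEq (k ⊕ p)]
    (Wi : Matrix m n ℝ) (S : Matrix k n ℝ) (C : Matrix p n ℝ) (Sp : Matrix n k ℝ)
    (d : k ⊕ p → ℝ) (hd : ∀ i, 1 ≤ d i) (P : Matrix n (k ⊕ p) ℝ)
    (ε : ℝ) (hε : ε ≠ 0)
    (hSp : IsMPInv S Sp) (hW : Wi * Sp * S = Wi)
    (hrank : S.rank = Fintype.card k)
    (hP : IsMPInv (Matrix.diagonal d * Matrix.fromRows S C) P) :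
    2 / ε ^ 2 * frob (Wi * P) ^ 2 ≤ 2 / ε ^ 2 * frob (Wi * Sp) ^ 2 := by
  classical
  set A : Matrix (k ⊕ p) n ℝ := Matrix.diagonal d * Matrix.fromRows S C with hA
  set Q : Matrix (k ⊕ p) (k ⊕ p) ℝ := A * P with hQ
  have hQt : Qᵀ = Q := hP.2.2.1
  have hQQ : Q * Q = Q := by
    rw [hQ, ← Matrix.mul_assoc, hP.1]
  set X : Matrix m (k ⊕ p) ℝ :=
    Matrix.fromCols (Wi * Sp * Matrix.diagonal (fun i => (d (Sum.inl i))⁻¹)) 0 with hX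
  have hdpos : ∀ i, (0:ℝ) < d i := fun i => lt_of_lt_of_le one_pos (hd i)
  have hrows : Matrix.diagonal d * Matrix.fromRows S C =
      Matrix.fromRows (Matrix.diagonal (fun i => d (Sum.inl i)) * S)
        (Matrix.diagonal (fun i => d (Sum.inr i)) * C) := by
    ext i j
    cases i with
    | inl i => simp [Matrix.mul_apply, Matrix.diagonal, Matrix.fromRows_apply_inl]
    | inr i => simp [Matrix.mul_apply, Matrix.diagonal, Matrix.fromRows_apply_inr]
  have hXA : X * A = Wi := by
    rw [hX, hA, hrows, Matrix.fromCols_mul_fromRows, Matrix.zero_mul, add_zero,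
      Matrix.mul_assoc (Wi * Sp), ← Matrix.mul_assoc (Matrix.diagonal _),
      Matrix.diagonal_mul_diagonal]
    have h1 : (fun i => (d (Sum.inl i))⁻¹ * d (Sum.inl i)) = fun _ => (1:ℝ) := by
      funext i; exact inv_mul_cancel₀ (hdpos _).ne'
    rw [h1, Matrix.diagonal_one, Matrix.one_mul]
    exact hW
  have hWP : Wi * P = X * Q := by
    rw [hQ, ← Matrix.mul_assoc, hXA]
  rw [frob_sq (Wi * P), frob_sq (Wi * Sp), hWP]
  have h1 : ∑ i, ∑ j, ((X * Q) i j) ^ 2 ≤ ∑ i, ∑ j, (X i j) ^ 2 :=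
    proj_contract X Q hQt hQQ
  have h2 : ∑ i, ∑ j, (X i j) ^ 2 ≤ ∑ i, ∑ j, ((Wi * Sp) i j) ^ 2 := by
    apply Finset.sum_le_sum
    intro i _
    rw [Fintype.sum_sum_type]
    have hzero : ∑ j : p, (X i (Sum.inr j)) ^ 2 = 0 := by
      simp [hX, Matrix.fromCols]
    rw [hzero, add_zero]
    apply Finset.sum_le_sum
    intro j _
    have hXe : X i (Sum.inl j) = (Wi * Sp) i j * (d (Sum.inl j))⁻¹ := by
      simp [hX, Matrix.fromCols, Matrix.mul_apply, Matrix.diagonal,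
        Finset.sum_mul]
    rw [hXe, mul_pow]
    have hinv : (d (Sum.inl j))⁻¹ ≤ 1 := inv_le_one_of_one_le₀ (hd _)
    have hinv0 : (0:ℝ) ≤ (d (Sum.inl j))⁻¹ := le_of_lt (inv_pos.mpr (hdpos _))
    have ht : (d (Sum.inl j))⁻¹ ^ 2 ≤ 1 := by nlinarith
    have := mul_le_mul_of_nonneg_left ht (sq_nonneg ((Wi * Sp) i j))
    linarith
  have hpos : (0:ℝ) ≤ 2 / ε ^ 2 := by positivity
  exact mul_le_mul_of_nonneg_left (le_trans h1 h2) hpos
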